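/- Let n ≥ 2, m ≥ n, k ≥ 1 an integer, and ρ ∈ (0,1]. For each agent i, let T_i ⊆ G with |T_i| = n−1 be a set of top goods of agent i (i.e., v_i(g) ≥ v_i(g') for every g ∈ T_i and g' ∉ T_i), and let t_i = min_{g ∈ T_i} v_i(g). Define the virtual valuation ṽ_i : G → ℝ by: ṽ_i(g) = v_i(g) for g ∈ T_i; for g ∉ T_i with v_i(g) ≥ t_i · m^{−k/(k+1)}, ṽ_i(g) = t_i · m^{−ℓ/(k+1)} where ℓ ∈ {1,…,k} is the smallest index such that v_i(g) ≥ t_i · m^{−ℓ/(k+1)}; and ṽ_i(g) = 0 for g ∉ T_i with v_i(g) < t_i · m^{−k/(k+1)}. Then every allocation X that is ρ-EFX with respect to the additive valuations (ṽ_1,…,ṽ_n) is (ρ/(2·m^{1/(k+1)}))-EFX with respect to (v_1,…,v_n). -/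

import Mathlib

/-- With the virtual valuations `vt` defined explicitly by bucketing
(`vt i g = v i g` on the top set `T i`; `vt i g = t i · m^(-ℓ/(k+1))` where `ℓ ∈ [1,k]`
is least with `v i g ≥ t i · m^(-ℓ/(k+1))`, when such an `ℓ` exists; `vt i g = 0`
otherwise), every allocation that is `ρ`-EFX with respect to `vt` is
`(ρ/(2·m^(1/(k+1))))`-EFX with respect to `v`. -/
theorem stmt_4 (n m k : ℕ) (hn : 2 ≤ n) (hm : n ≤ m) (hk : 1 ≤ k)
    (ρ : ℝ) (hρ0 : 0 < ρ) (hρ1 : ρ ≤ 1)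
    (v vt : Fin n → Fin m → ℝ)
    (hv : ∀ i g, 0 ≤ v i g)
    (T : Fin n → Finset (Fin m))
    (hTcard : ∀ i, (T i).card = n - 1)
    (hTtop : ∀ i : Fin n, ∀ g ∈ T i, ∀ g' ∉ T i, v i g' ≤ v i g)
    (t : Fin n → ℝ)
    (htmem : ∀ i, ∃ g ∈ T i, v i g = t i)
    (htmin : ∀ i : Fin n, ∀ g ∈ T i, t i ≤ v i g)
    (hvtT : ∀ i : Fin n, ∀ g ∈ T i, vt i g = v i g)
    (hvtMid : ∀ i : Fin n, ∀ g ∉ T i,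
      t i * (m : ℝ) ^ (-(k : ℝ) / ((k : ℝ) + 1)) ≤ v i g →
      ∃ ℓ : ℕ, 1 ≤ ℓ ∧ ℓ ≤ k ∧
        t i * (m : ℝ) ^ (-(ℓ : ℝ) / ((k : ℝ) + 1)) ≤ v i g ∧
        (∀ ℓ' : ℕ, 1 ≤ ℓ' → ℓ' < ℓ → v i g < t i * (m : ℝ) ^ (-(ℓ' : ℝ) / ((k : ℝ) + 1))) ∧
        vt i g = t i * (m : ℝ) ^ (-(ℓ : ℝ) / ((k : ℝ) + 1)))
    (hvtLow : ∀ i : Fin n, ∀ g ∉ T i,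
      v i g < t i * (m : ℝ) ^ (-(k : ℝ) / ((k : ℝ) + 1)) → vt i g = 0)
    (X : Fin n → Finset (Fin m))
    (hdisj : ∀ i j : Fin n, i ≠ j → Disjoint (X i) (X j))
    (hcover : ∀ g : Fin m, ∃ i : Fin n, g ∈ X i)
    (hEFX : ∀ i j : Fin n, X j ≠ ∅ → ∀ g ∈ X j,
      ρ * ((X j).erase g).sum (vt i) ≤ (X i).sum (vt i)) :
    ∀ i j : Fin n, X j ≠ ∅ → ∀ g ∈ X j,
      (ρ / (2 * (m : ℝ) ^ ((1 : ℝ) / ((k : ℝ) + 1)))) * ((X j).erase g).sum (v i)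
        ≤ (X i).sum (v i) := by
  have hm2 : (2:ℕ) ≤ m := le_trans hn hm
  have hmpos : (0:ℝ) < (m:ℝ) := by exact_mod_cast lt_of_lt_of_le (by norm_num) hm2
  have hm1 : (1:ℝ) ≤ (m:ℝ) := by exact_mod_cast le_trans (by norm_num) hm2
  set M : ℝ := (m:ℝ) ^ ((1:ℝ)/((k:ℝ)+1)) with hMdef
  have hk1pos : (0:ℝ) < (k:ℝ)+1 := by positivity
  have hM0 : 0 < M := Real.rpow_pos_of_pos hmpos _
  have hM1 : 1 ≤ M := Real.one_le_rpow hm1 (by positivity)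
  have ht0 : ∀ i, 0 ≤ t i := by
    intro i; obtain ⟨g, hg, hge⟩ := htmem i; rw [← hge]; exact hv i g
  have hvoff : ∀ i g, g ∉ T i → v i g ≤ t i := by
    intro i g hg; obtain ⟨g', hg', hge⟩ := htmem i; rw [← hge]; exact hTtop i g' hg' g hg
  have hvt0 : ∀ i g, 0 ≤ vt i g := by
    intro i g
    by_cases hT : g ∈ T i
    · rw [hvtT i g hT]; exact hv i g
    · by_cases hmid : t i * (m:ℝ)^(-(k:ℝ)/((k:ℝ)+1)) ≤ v i g
      · obtain ⟨ℓ, _, _, _, _, hℓeq⟩ := hvtMid i g hT hmid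
        rw [hℓeq]
        exact mul_nonneg (ht0 i) (Real.rpow_nonneg hmpos.le _)
      · rw [hvtLow i g hT (lt_of_not_ge hmid)]
  have hvtle : ∀ i g, vt i g ≤ v i g := by
    intro i g
    by_cases hT : g ∈ T i
    · rw [hvtT i g hT]
    · by_cases hmid : t i * (m:ℝ)^(-(k:ℝ)/((k:ℝ)+1)) ≤ v i g
      · obtain ⟨ℓ, _, _, hℓle, _, hℓeq⟩ := hvtMid i g hT hmid
        rw [hℓeq]; exact hℓle
      · rw [hvtLow i g hT (lt_of_not_ge hmid)]; exact hv i g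
  set c : Fin n → ℝ := fun i => t i * (m:ℝ) ^ (-(k:ℝ)/((k:ℝ)+1)) with hcdef
  have hc0 : ∀ i, 0 ≤ c i := fun i => mul_nonneg (ht0 i) (Real.rpow_nonneg hmpos.le _)
  have hmM : (m:ℝ) * (m:ℝ)^(-(k:ℝ)/((k:ℝ)+1)) = M := by
    rw [hMdef]
    nth_rewrite 1 [← Real.rpow_one (m:ℝ)]
    rw [← Real.rpow_add hmpos]
    congr 1
    field_simp
    ring
  have hpt : ∀ i g, v i g ≤ M * vt i g + c i := by
    intro i g
    have hcge := hc0 i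
    by_cases hT : g ∈ T i
    · have h1 : vt i g = v i g := hvtT i g hT
      have h2 : 0 ≤ v i g := hv i g
      nlinarith
    · by_cases hmid : t i * (m:ℝ)^(-(k:ℝ)/((k:ℝ)+1)) ≤ v i g
      · obtain ⟨ℓ, hℓ1, hℓk, hℓle, hℓmin, hℓeq⟩ := hvtMid i g hT hmid
        rcases eq_or_lt_of_le hℓ1 with h1 | h2
        · -- ℓ = 1
          have hℓ : ℓ = 1 := h1.symm
          subst hℓ
          have hMm : M * (m:ℝ)^(-((1:ℕ):ℝ)/((k:ℝ)+1)) = 1 := by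
            rw [hMdef, ← Real.rpow_add hmpos,
              show (1:ℝ)/((k:ℝ)+1) + -((1:ℕ):ℝ)/((k:ℝ)+1) = 0 by push_cast; field_simp; ring,
              Real.rpow_zero]
          have hle := hvoff i g hT
          rw [hℓeq]
          nlinarith [ht0 i]
        · -- ℓ ≥ 2
          have hup := hℓmin (ℓ-1) (by omega) (by omega)
          have hcast : ((ℓ-1:ℕ):ℝ) = (ℓ:ℝ) - 1 := by
            push_cast [hℓ1]; ring
          have hpow : (m:ℝ)^(-(((ℓ-1:ℕ)):ℝ)/((k:ℝ)+1)) = M * (m:ℝ)^(-(ℓ:ℝ)/((k:ℝ)+1)) := by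
            rw [hMdef, ← Real.rpow_add hmpos]
            congr 1
            rw [hcast]
            field_simp
            ring
          rw [hℓeq]
          rw [hpow] at hup
          nlinarith [ht0 i]
      · rw [hvtLow i g hT (lt_of_not_ge hmid)]
        have := lt_of_not_ge hmid
        simp only [mul_zero, zero_add]
        rw [hcdef]
        linarith
  have hsum : ∀ i (S : Finset (Fin m)), S.sum (v i) ≤ M * S.sum (vt i) + t i * M := by
    intro i S
    have hcard : (S.card:ℝ) ≤ (m:ℝ) := by
      exact_mod_cast (by simpa using S.card_le_univ : S.card ≤ m)
    calc S.sum (v i) ≤ S.sum (fun g => M * vt i g + c i) := Finset.sum_le_sum fun g _ => hpt i g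
      _ = M * S.sum (vt i) + (S.card:ℝ) * c i := by
          rw [Finset.sum_add_distrib, ← Finset.mul_sum, Finset.sum_const, nsmul_eq_mul]
      _ ≤ M * S.sum (vt i) + (m:ℝ) * c i := by
          have := mul_le_mul_of_nonneg_right hcard (hc0 i)
          linarith
      _ = M * S.sum (vt i) + t i * M := by
          rw [hcdef]
          simp only []
          rw [show (m:ℝ) * (t i * (m:ℝ)^(-(k:ℝ)/((k:ℝ)+1))) = t i * ((m:ℝ) * (m:ℝ)^(-(k:ℝ)/((k:ℝ)+1))) by ring, hmM]
  intro i j hXj g hg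
  by_cases hij : i = j
  · subst hij
    have h1 : ((X i).erase g).sum (v i) ≤ (X i).sum (v i) :=
      Finset.sum_le_sum_of_subset_of_nonneg (Finset.erase_subset _ _) (fun x _ _ => hv i x)
    have h2 : 0 ≤ ((X i).erase g).sum (v i) := Finset.sum_nonneg fun x _ => hv i x
    have hco : ρ/(2*M) ≤ 1 := by
      rw [div_le_one (by positivity)]
      nlinarith
    calc ρ/(2*M) * ((X i).erase g).sum (v i) ≤ 1 * ((X i).erase g).sum (v i) :=
          mul_le_mul_of_nonneg_right hco h2
      _ = ((X i).erase g).sum (v i) := one_mul _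
      _ ≤ (X i).sum (v i) := h1
  · -- i ≠ j
    choose owner howner using hcover
    have hkey : ρ * t i ≤ (X i).sum (v i) ∨ (X j).erase g = ∅ := by
      by_cases hA : ∃ g', g' ∈ T i ∧ g' ∈ X i
      · left
        obtain ⟨g', hgT, hgX⟩ := hA
        have h1 : t i ≤ (X i).sum (v i) :=
          le_trans (htmin i g' hgT) (Finset.single_le_sum (f := v i) (fun x _ => hv i x) hgX)
        nlinarith [ht0 i]
      · by_cases hB : ∃ j' g' h', j' ≠ i ∧ g' ∈ T i ∧ g' ∈ X j' ∧ h' ∈ X j' ∧ h' ≠ g'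
        · left
          obtain ⟨j', g', h', hji, hgT, hgX, hhX, hhg⟩ := hB
          have hne : X j' ≠ ∅ := by
            intro he; rw [he] at hhX; exact absurd hhX (Finset.notMem_empty h')
          have hefx := hEFX i j' hne h' hhX
          have hgmem : g' ∈ (X j').erase h' := Finset.mem_erase.mpr ⟨Ne.symm hhg, hgX⟩
          have h1 : vt i g' ≤ ((X j').erase h').sum (vt i) :=
            Finset.single_le_sum (fun x _ => hvt0 i x) hgmem
          have h2 : t i ≤ vt i g' := by rw [hvtT i g' hgT]; exact htmin i g' hgT
          have h3 : (X i).sum (vt i) ≤ (X i).sum (v i) := Finset.sum_le_sum fun x _ => hvtle i x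
          have h4 : ρ * t i ≤ ρ * ((X j').erase h').sum (vt i) :=
            mul_le_mul_of_nonneg_left (h2.trans h1) hρ0.le
          linarith
        · right
          have hsing : ∀ g' ∈ T i, owner g' ≠ i ∧ ∀ h' ∈ X (owner g'), h' = g' := by
            intro g' hgT
            have hni : owner g' ≠ i := by
              intro he
              exact hA ⟨g', hgT, by rw [← he]; exact howner g'⟩
            refine ⟨hni, ?_⟩
            intro h' hh'
            by_contra hne
            exact hB ⟨owner g', g', h', hni, hgT, howner g', hh', hne⟩
          have hinj : Set.InjOn owner (T i) := by
            intro a ha b hb hab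
            have := (hsing a ha).2 b (by rw [hab]; exact howner b)
            exact this.symm
          have himg : (T i).image owner = Finset.univ.erase i := by
            apply Finset.eq_of_subset_of_card_le
            · intro x hx
              simp only [Finset.mem_image] at hx
              obtain ⟨a, ha, rfl⟩ := hx
              exact Finset.mem_erase.mpr ⟨(hsing a ha).1, Finset.mem_univ _⟩
            · rw [Finset.card_erase_of_mem (Finset.mem_univ i), Finset.card_univ, Fintype.card_fin,
                Finset.card_image_of_injOn hinj, hTcard]
          have hjmem : j ∈ (T i).image owner := by
            rw [himg]
            exact Finset.mem_erase.mpr ⟨fun h => hij h.symm, Finset.mem_univ _⟩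
          obtain ⟨g', hgT, hgo⟩ := Finset.mem_image.mp hjmem
          have hall := (hsing g' hgT).2
          rw [hgo] at hall
          apply Finset.eq_empty_iff_forall_notMem.mpr
          intro h' hh'
          have h1 := Finset.mem_erase.mp hh'
          have e1 := hall h' h1.2
          have e2 := hall g hg
          exact h1.1 (e1.trans e2.symm)
    rcases hkey with hkey | hkey
    · have h1 := hsum i ((X j).erase g)
      have h2 := hEFX i j hXj g hg
      have h3 : (X i).sum (vt i) ≤ (X i).sum (v i) := Finset.sum_le_sum fun x _ => hvtle i x
      have hS0 : 0 ≤ ((X j).erase g).sum (v i) := Finset.sum_nonneg fun x _ => hv i x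
      have hco0 : 0 ≤ ρ/(2*M) := by positivity
      have step1 : ρ/(2*M) * ((X j).erase g).sum (v i) ≤
          ρ/(2*M) * (M * ((X j).erase g).sum (vt i) + t i * M) :=
        mul_le_mul_of_nonneg_left h1 hco0
      have step2 : ρ/(2*M) * (M * ((X j).erase g).sum (vt i) + t i * M) =
          (ρ * ((X j).erase g).sum (vt i) + ρ * t i)/2 := by
        field_simp
      rw [step2] at step1
      linarith
    · rw [hkey]
      simp only [Finset.sum_empty, mul_zero]
      exact Finset.sum_nonneg fun x _ => hv i x
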